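/- Let Ω ⊆ ℝ^n be open, δ > 0, and E ⊆ ℝ^n measurable with Per_K(E,Ω) < ∞. Then E is strongly K-outward minimizing in Ω with constant δ if and only if for every measurable G ⊆ ℝ^n with G∖E compactly contained in Ω one has Per_K(E∩G,Ω) ≤ Per_K(G,Ω) − δ·|G∖E|, where |·| is Lebesgue measure. -/

import Mathlib

open MeasureTheory Set Filter Metric Topology
open scoped ENNReal Pointwise

noncomputable section

abbrev Euc (n : ℕ) := EuclideanSpace ℝ (Fin n)

/-- Admissible kernel: measurable, nonnegative and even away from the origin,
with `∫ min(1,|x|) K(x) dx < ∞`. -/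
def KernelOK {n : ℕ} (K : Euc n → ℝ) : Prop :=
  Measurable K ∧ (∀ x : Euc n, x ≠ 0 → 0 ≤ K x) ∧ (∀ x : Euc n, x ≠ 0 → K (-x) = K x) ∧
    (∫⁻ x : Euc n, ENNReal.ofReal (min 1 ‖x‖ * K x)) < ⊤

/-- The `K`-perimeter of `E` in `Ω`. -/
def perK {n : ℕ} (K : Euc n → ℝ) (E Ω : Set (Euc n)) : ℝ≥0∞ :=
  (∫⁻ x in E, ∫⁻ y in Ω \ E, ENNReal.ofReal (K (x - y))) +
  (∫⁻ x in E ∩ Ω, ∫⁻ y in (Ω ∪ E)ᶜ, ENNReal.ofReal (K (x - y)))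

/-- The (total) `K`-perimeter of `E`. -/
def perKtot {n : ℕ} (K : Euc n → ℝ) (E : Set (Euc n)) : ℝ≥0∞ :=
  ∫⁻ x in E, ∫⁻ y in Eᶜ, ENNReal.ofReal (K (x - y))

/-- `A` is compactly contained in `Ω`. -/
def CptIn {n : ℕ} (A Ω : Set (Euc n)) : Prop :=
  IsCompact (closure A) ∧ closure A ⊆ Ω

/-- `E` is `K`-outward minimizing in `Ω`. -/
def OutMin {n : ℕ} (K : Euc n → ℝ) (E Ω : Set (Euc n)) : Prop :=
  ∀ F : Set (Euc n), MeasurableSet F → E ⊆ F → CptIn (F \ E) Ω →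
    perK K E Ω ≤ perK K F Ω

/-- `E` is strongly `K`-outward minimizing in `Ω` with constant `δ`. -/
def StrongOutMin {n : ℕ} (K : Euc n → ℝ) (δ : ℝ) (E Ω : Set (Euc n)) : Prop :=
  ∀ F : Set (Euc n), MeasurableSet F → E ⊆ F → CptIn (F \ E) Ω →
    perK K E Ω + ENNReal.ofReal δ * volume (F \ E) ≤ perK K F Ω

end
noncomputable section
open MeasureTheory Set Filter Metric Topology
open scoped ENNReal Pointwise

/-- The truncated `K`-curvature of `G` at `x`, with truncation parameter `ε`:
`∫_{ℝⁿ∖B(x,ε)} (χ_{Gᶜ}(y) − χ_G(y)) K(x−y) dy`. -/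
def truncCurv {n : ℕ} (K : Euc n → ℝ) (G : Set (Euc n)) (x : Euc n) (ε : ℝ) : ℝ :=
  ∫ y in (Metric.ball x ε)ᶜ,
    ((Gᶜ).indicator (fun _ => (1:ℝ)) y - G.indicator (fun _ => (1:ℝ)) y) * K (x - y)

/-- `G` has compact boundary of class `C^{1,1}`: the boundary is compact, and `G` is the
sublevel set of a `C^1` function with Lipschitz gradient which is nondegenerate on the
boundary. -/
def HasCptC11Boundary {n : ℕ} (G : Set (Euc n)) : Prop :=
  IsCompact (frontier G) ∧
  ∃ φ : Euc n → ℝ, ContDiff ℝ 1 φ ∧ (∃ L : NNReal, LipschitzWith L (fderiv ℝ φ)) ∧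
    G = {x | φ x ≤ 0} ∧ frontier G = {x | φ x = 0} ∧
    ∀ x ∈ frontier G, fderiv ℝ φ x ≠ 0

/-- `H^K_A(x) ≥ c` in the viscosity sense: every set `G` with compact `C^{1,1}` boundary
with `G ⊆ A` and `x ∈ ∂G` has `K`-curvature at least `c` at `x` (the curvature being the
limit of the truncated curvatures). -/
def ViscCurvGE {n : ℕ} (K : Euc n → ℝ) (A : Set (Euc n)) (x : Euc n) (c : ℝ) : Prop :=
  ∀ G : Set (Euc n), HasCptC11Boundary G → G ⊆ A → x ∈ frontier G →
    ∀ L : ℝ, Tendsto (truncCurv K G x) (𝓝[>] (0:ℝ)) (𝓝 L) → c ≤ L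

/-- Signed distance function from `E` (positive inside). -/
def sgnDist {n : ℕ} (E : Set (Euc n)) (x : Euc n) : ℝ :=
  Metric.infDist x Eᶜ - Metric.infDist x E

/-- The Almgren–Taylor–Wang energy `Per_K(G) − (1/h)∫_G d_E`. -/
def atwEnergy {n : ℕ} (K : Euc n → ℝ) (E : Set (Euc n)) (h : ℝ) (G : Set (Euc n)) : ℝ :=
  (perKtot K G).toReal - (1/h) * ∫ x in G, sgnDist E x

/-- `T` is an ATW minimizer for `E` at step `h`: it minimizes the ATW energy among all
measurable sets (competitors with infinite energy being irrelevant). -/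
def ATWMin {n : ℕ} (K : Euc n → ℝ) (E : Set (Euc n)) (h : ℝ) (T : Set (Euc n)) : Prop :=
  MeasurableSet T ∧ perKtot K T < ⊤ ∧ IntegrableOn (sgnDist E) T ∧
  ∀ G : Set (Euc n), MeasurableSet G → perKtot K G < ⊤ → IntegrableOn (sgnDist E) G →
    atwEnergy K E h T ≤ atwEnergy K E h G

/-- The set of Lebesgue density-one points of `T`. -/
def densityPts {n : ℕ} (T : Set (Euc n)) : Set (Euc n) :=
  {x | Tendsto (fun ρ : ℝ =>
      volume (T ∩ Metric.closedBall x ρ) / volume (Metric.closedBall x ρ))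
    (𝓝[>] (0:ℝ)) (𝓝 1)}

/-- The nonlocal functional `J_K(v) = ½∬ |v(x)−v(y)| K(x−y) dx dy`. -/
def JK {n : ℕ} (K : Euc n → ℝ) (v : Euc n → ℝ) : ℝ≥0∞ :=
  (1/2 : ℝ≥0∞) * ∫⁻ x : Euc n, ∫⁻ y : Euc n,
    ENNReal.ofReal |v x - v y| * ENNReal.ofReal (K (x - y))

end

open MeasureTheory Set Filter Metric Topology
open scoped ENNReal


-- Auxiliary developments for Statement 2.
noncomputable section

def ggAux {n : ℕ} (K : Euc n → ℝ) (Ω A : Set (Euc n)) (x y : Euc n) : ℝ≥0∞ :=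
  Set.indicator {p : Euc n × Euc n | p.1 ∈ A ∧ p.2 ∉ A ∧ (p.1 ∈ Ω ∨ p.2 ∈ Ω)}
    (fun p => ENNReal.ofReal (K (p.1 - p.2))) (x, y)

lemma ggAux_setMeas {n : ℕ} (Ω A : Set (Euc n)) (hΩ : MeasurableSet Ω) (hA : MeasurableSet A) :
    MeasurableSet {p : Euc n × Euc n | p.1 ∈ A ∧ p.2 ∉ A ∧ (p.1 ∈ Ω ∨ p.2 ∈ Ω)} := by
  apply MeasurableSet.inter (hA.preimage measurable_fst)
  exact MeasurableSet.inter ((hA.compl).preimage measurable_snd)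
    ((hΩ.preimage measurable_fst).union (hΩ.preimage measurable_snd))

lemma ggAux_meas {n : ℕ} (K : Euc n → ℝ) (hK : Measurable K) (Ω A : Set (Euc n))
    (hΩ : MeasurableSet Ω) (hA : MeasurableSet A) :
    Measurable (fun p : Euc n × Euc n => ggAux K Ω A p.1 p.2) := by
  have : (fun p : Euc n × Euc n => ggAux K Ω A p.1 p.2) =
      Set.indicator {p : Euc n × Euc n | p.1 ∈ A ∧ p.2 ∉ A ∧ (p.1 ∈ Ω ∨ p.2 ∈ Ω)}
        (fun p => ENNReal.ofReal (K (p.1 - p.2))) := rfl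
  rw [this]
  exact Measurable.indicator
    (ENNReal.measurable_ofReal.comp (hK.comp (measurable_fst.sub measurable_snd)))
    (ggAux_setMeas Ω A hΩ hA)

lemma perK_eq_ggAux {n : ℕ} (K : Euc n → ℝ) (hK : Measurable K) (Ω A : Set (Euc n))
    (hΩ : MeasurableSet Ω) (hA : MeasurableSet A) :
    perK K A Ω = ∫⁻ x, ∫⁻ y, ggAux K Ω A x y := by
  have kmeas : Measurable (fun p : Euc n × Euc n => ENNReal.ofReal (K (p.1 - p.2))) :=
    ENNReal.measurable_ofReal.comp (hK.comp (measurable_fst.sub measurable_snd))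
  have hF1m : Measurable (fun x => A.indicator (fun x => ∫⁻ y in Ω \ A, ENNReal.ofReal (K (x - y))) x) := by
    apply Measurable.indicator _ hA
    exact Measurable.lintegral_prod_right' (f := fun p : Euc n × Euc n => ENNReal.ofReal (K (p.1 - p.2))) kmeas
  calc perK K A Ω
      = (∫⁻ x, A.indicator (fun x => ∫⁻ y in Ω \ A, ENNReal.ofReal (K (x - y))) x) +
        (∫⁻ x, (A ∩ Ω).indicator (fun x => ∫⁻ y in (Ω ∪ A)ᶜ, ENNReal.ofReal (K (x - y))) x) := by
        rw [perK, ← lintegral_indicator hA, ← lintegral_indicator (hA.inter hΩ)]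
    _ = ∫⁻ x, (A.indicator (fun x => ∫⁻ y in Ω \ A, ENNReal.ofReal (K (x - y))) x +
        (A ∩ Ω).indicator (fun x => ∫⁻ y in (Ω ∪ A)ᶜ, ENNReal.ofReal (K (x - y))) x) := by
        rw [lintegral_add_left hF1m]
    _ = ∫⁻ x, ∫⁻ y, ggAux K Ω A x y := by
        apply lintegral_congr
        intro x
        by_cases hxA : x ∈ A
        · by_cases hxΩ : x ∈ Ω
          · have hg : ∀ y, ggAux K Ω A x y = Aᶜ.indicator (fun y => ENNReal.ofReal (K (x - y))) y := by
              intro y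
              by_cases hyA : y ∈ A <;> simp [ggAux, Set.indicator, hxA, hxΩ, hyA]
            simp only [hg]
            rw [lintegral_indicator hA.compl]
            have hsplit : Aᶜ = (Ω \ A) ∪ (Ω ∪ A)ᶜ := by
              ext y; by_cases hy : y ∈ Ω <;> simp [hy]
            rw [hsplit, lintegral_union ((hΩ.union hA).compl)
              (by
                rw [Set.disjoint_right]
                intro y hy hy'
                simp only [Set.mem_compl_iff, Set.mem_union, not_or] at hy
                exact hy.1 hy'.1)]
            simp [Set.indicator, hxA, hxΩ]
          · have hg : ∀ y, ggAux K Ω A x y = (Ω \ A).indicator (fun y => ENNReal.ofReal (K (x - y))) y := by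
              intro y
              by_cases hyA : y ∈ A <;> by_cases hyΩ : y ∈ Ω <;>
                simp [ggAux, Set.indicator, hxA, hxΩ, hyA, hyΩ]
            simp only [hg]
            rw [lintegral_indicator (hΩ.diff hA)]
            simp [Set.indicator, hxA, hxΩ]
        · have hg : ∀ y, ggAux K Ω A x y = 0 := by
            intro y; simp [ggAux, Set.indicator, hxA]
          simp [hg, Set.indicator, hxA]

lemma ggAux_submod {n : ℕ} (K : Euc n → ℝ) (Ω E G : Set (Euc n)) (x y : Euc n) :
    ggAux K Ω (E ∩ G) x y + ggAux K Ω (E ∪ G) x y ≤ ggAux K Ω E x y + ggAux K Ω G x y := by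
  by_cases hxE : x ∈ E <;> by_cases hxG : x ∈ G <;> by_cases hyE : y ∈ E <;> by_cases hyG : y ∈ G <;>
    simp [ggAux, Set.indicator, Set.mem_inter_iff, Set.mem_union, hxE, hxG, hyE, hyG,
      le_self_add, le_add_self] <;>
  split_ifs <;>
  simp_all [Set.mem_inter_iff, Set.mem_union, le_self_add, le_add_self]

lemma perK_submod {n : ℕ} (K : Euc n → ℝ) (hK : Measurable K) (Ω E G : Set (Euc n))
    (hΩ : MeasurableSet Ω) (hE : MeasurableSet E) (hG : MeasurableSet G) :
    perK K (E ∩ G) Ω + perK K (E ∪ G) Ω ≤ perK K E Ω + perK K G Ω := by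
  have hout : ∀ (A : Set (Euc n)), MeasurableSet A →
      Measurable (fun x => ∫⁻ y, ggAux K Ω A x y) := fun A hA =>
    Measurable.lintegral_prod_right' (ggAux_meas K hK Ω A hΩ hA)
  have hin : ∀ (A : Set (Euc n)), MeasurableSet A → ∀ x,
      Measurable (fun y => ggAux K Ω A x y) := fun A hA x =>
    (ggAux_meas K hK Ω A hΩ hA).comp (measurable_prodMk_left)
  rw [perK_eq_ggAux K hK Ω _ hΩ (hE.inter hG), perK_eq_ggAux K hK Ω _ hΩ (hE.union hG),
    perK_eq_ggAux K hK Ω _ hΩ hE, perK_eq_ggAux K hK Ω _ hΩ hG]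
  rw [← lintegral_add_left (hout _ (hE.inter hG)), ← lintegral_add_left (hout _ hE)]
  apply lintegral_mono
  intro x
  dsimp only
  rw [← lintegral_add_left (hin _ (hE.inter hG) x), ← lintegral_add_left (hin _ hE x)]
  exact lintegral_mono fun y => ggAux_submod K Ω E G x y

end

/-- characterization of strong `K`-outward minimality via intersections. -/
theorem strongOutMin_iff_inter {n : ℕ} (K : Euc n → ℝ) (hK : KernelOK K)
    (Ω E : Set (Euc n)) (δ : ℝ) (hδ : 0 < δ) (hΩ : IsOpen Ω) (hE : MeasurableSet E)
    (hfin : perK K E Ω < ⊤) :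
    StrongOutMin K δ E Ω ↔
      ∀ G : Set (Euc n), MeasurableSet G → CptIn (G \ E) Ω →
        perK K (E ∩ G) Ω + ENNReal.ofReal δ * volume (G \ E) ≤ perK K G Ω := by
  constructor
  · intro hs G hG hcpt
    have hstr := hs (E ∪ G) (hE.union hG) subset_union_left
      (by rw [Set.union_diff_left]; exact hcpt)
    rw [Set.union_diff_left] at hstr
    have hsub := perK_submod K hK.1 Ω E G hΩ.measurableSet hE hG
    have key : perK K (E ∩ G) Ω + ENNReal.ofReal δ * volume (G \ E) + perK K E Ω ≤
        perK K G Ω + perK K E Ω := by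
      calc perK K (E ∩ G) Ω + ENNReal.ofReal δ * volume (G \ E) + perK K E Ω
          = perK K (E ∩ G) Ω + (perK K E Ω + ENNReal.ofReal δ * volume (G \ E)) := by ring
        _ ≤ perK K (E ∩ G) Ω + perK K (E ∪ G) Ω := add_le_add_right hstr _
        _ ≤ perK K E Ω + perK K G Ω := hsub
        _ = perK K G Ω + perK K E Ω := add_comm _ _
    exact (ENNReal.add_le_add_iff_right hfin.ne).mp key
  · intro h F hF hEF hcpt
    have := h F hF hcpt
    rwa [Set.inter_eq_left.mpr hEF] at this
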